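/- arXiv:1807.10217 — 2 statements merged into one kernel-verified Lean document; each statement's English description precedes it below -/
import Mathlib

section
/- Let Y ∈ P(w) and let x ∈ O_Y. Then there is a unique kernel flag of type Y preserved by x, namely V_{ij} = ker(x_{i+j-1} ∘ ... ∘ x_{i+1} ∘ x_i); moreover the maps V_{ij}/V_{i,j-1} → V_{i+1,j-1}/V_{i+1,j-2} induced by x_i are injective for all j > 1. -/
open scoped BigOperators Classical

noncomputable section

/-- A triangular array of size `n`: entries `y i j` for `1 ≤ i ≤ n`, `1 ≤ j ≤ n - i + 1`
(zero outside this range), weakly decreasing along ladders: `y (i-1) (j+1) ≤ y i j`. -/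
def IsTri (n : ℕ) (y : ℕ → ℕ → ℕ) : Prop :=
  (∀ i j, ¬(1 ≤ i ∧ i ≤ n ∧ 1 ≤ j ∧ j ≤ n - i + 1) → y i j = 0) ∧
  (∀ i j, 2 ≤ i → i ≤ n → 1 ≤ j → j ≤ n - i + 1 → y (i - 1) (j + 1) ≤ y i j)

/-- The dimension vector of a triangular array: the `i`-th chute sum. -/
def udim (n : ℕ) (y : ℕ → ℕ → ℕ) (i : ℕ) : ℕ := ∑ j ∈ Finset.Icc 1 (n - i + 1), y i j

/-- The set `P(w)` of triangular arrays of size `n` with dimension vector `w`. -/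
def InP (n : ℕ) (w : ℕ → ℕ) (y : ℕ → ℕ → ℕ) : Prop :=
  IsTri n y ∧ ∀ i, 1 ≤ i → i ≤ n → udim n y i = w i

/-- The set `B(w)`: families `(b i j)` for `1 ≤ i ≤ j ≤ n` (zero outside) with
`∑ b i j • γ_{ij} = w`, i.e. for each `1 ≤ k ≤ n`, `∑_{i ≤ k ≤ j} b i j = w k`. -/
def InB (n : ℕ) (w : ℕ → ℕ) (b : ℕ → ℕ → ℕ) : Prop :=
  (∀ i j, ¬(1 ≤ i ∧ i ≤ j ∧ j ≤ n) → b i j = 0) ∧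
  ∀ k, 1 ≤ k → k ≤ n → (∑ i ∈ Finset.Icc 1 k, ∑ j ∈ Finset.Icc k n, b i j) = w k

/-- The map `ν : P(w) → B(w)`. -/
def nuMap (n : ℕ) (y : ℕ → ℕ → ℕ) : ℕ → ℕ → ℕ := fun i j =>
  if 1 ≤ i ∧ i ≤ j ∧ j ≤ n then y i (j - i + 1) - y (i - 1) (j - i + 2) else 0

/-- The map `ν̄ : B(w) → P(w)`. -/
def nubarMap (n : ℕ) (b : ℕ → ℕ → ℕ) : ℕ → ℕ → ℕ := fun i j =>
  if 1 ≤ i ∧ i ≤ n ∧ 1 ≤ j ∧ j ≤ n - i + 1 then ∑ h ∈ Finset.Icc 1 i, b h (i + j - 1) else 0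

/-- `Raise Y i j` increments the entry in chute `i`, column `j`. -/
def Raise (y : ℕ → ℕ → ℕ) (i j : ℕ) : ℕ → ℕ → ℕ := fun p q =>
  if p = i ∧ q = j then y p q + 1 else y p q

/-- `Lower Y i j` decrements the entry in chute `i`, column `j`. -/
def Lower (y : ℕ → ℕ → ℕ) (i j : ℕ) : ℕ → ℕ → ℕ := fun p q =>
  if p = i ∧ q = j then y p q - 1 else y p q

/-- `K_i(Y,k) = max({1} ∪ {j : 2 ≤ j ≤ k, y i j < y (i+1) (j-1)})`. -/
def Kval (y : ℕ → ℕ → ℕ) (i k : ℕ) : ℕ :=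
  ((Finset.Icc 2 k).filter (fun j => y i j < y (i + 1) (j - 1))).sup id ⊔ 1

/-- Procedure `a`: `a(Y,i,k) = (Raise(Y,i,K_i(Y,k)), i-1, K_i(Y,k))`. -/
def aStep (t : (ℕ → ℕ → ℕ) × ℕ × ℕ) : (ℕ → ℕ → ℕ) × ℕ × ℕ :=
  (Raise t.1 t.2.1 (Kval t.1 t.2.1 t.2.2), t.2.1 - 1, Kval t.1 t.2.1 t.2.2)

/-- Procedure `A_i`: apply `a` exactly `i` times starting from `(Y, i, n - i + 1)`. -/
def Aproc (n i : ℕ) (y : ℕ → ℕ → ℕ) : ℕ → ℕ → ℕ := (aStep^[i] (y, i, n - i + 1)).1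

/-- `Del↘(Y)` : delete the first chute. -/
def delChute (y : ℕ → ℕ → ℕ) : ℕ → ℕ → ℕ := fun i j =>
  if 1 ≤ i ∧ 1 ≤ j then y (i + 1) j else 0

/-- `Y ∪↘ Q` : adjoin `Q` as the new topmost chute. -/
def adjChute (y : ℕ → ℕ → ℕ) (q : ℕ → ℕ) : ℕ → ℕ → ℕ := fun i j =>
  if i = 0 then 0 else if i = 1 then q j else y (i - 1) j

/-- The set whose infimum is `I(Y,k)`; `I(Y,k) < ∞` iff this set is nonempty. -/
def Iset (n : ℕ) (y : ℕ → ℕ → ℕ) (k : ℕ) : Set ℕ := {j | k ≤ j ∧ j ≤ n ∧ 0 < y 1 j}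

/-- `I(Y,k)`: the smallest `j ≥ k` with `y 1 j > 0`. -/
def Idef (n : ℕ) (y : ℕ → ℕ → ℕ) (k : ℕ) : ℕ := sInf (Iset n y k)

/-- The set whose infimum is `J(Y,k)`; `J(Y,k) < ∞` iff this set is nonempty. -/
def Jset (n : ℕ) (y : ℕ → ℕ → ℕ) (k : ℕ) : Set ℕ :=
  {j | Idef n y k < j ∧ j ≤ n ∧ y 1 j < y 2 (j - 1)}

/-- `J(Y,k)`: the smallest `j > I(Y,k)` with `y 1 j < y 2 (j-1)`. -/
def Jdef (n : ℕ) (y : ℕ → ℕ → ℕ) (k : ℕ) : ℕ := sInf (Jset n y k)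

/-- Procedure `B`, by induction on the size `n`. -/
def Bproc : ℕ → (ℕ → ℕ → ℕ) → ℕ → ((ℕ → ℕ → ℕ) × ℕ)
  | 0, y, _ => (y, 1)
  | n + 1, y, k =>
    if (Jset (n + 1) y k).Nonempty then
      let zr := Bproc n (delChute y) (Jdef (n + 1) y k - 1)
      (Lower (adjChute zr.1 (y 1)) 1 (Idef (n + 1) y k), zr.2 + 1)
    else (Lower y 1 (Idef (n + 1) y k), 1)

/-- Apply `A_m^{y_{N+1-m,m} - y_{N-m,m+1}}` for `m = 1, …, M` (innermost `A_1`). -/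
def applyAs (N : ℕ) (y : ℕ → ℕ → ℕ) : ℕ → (ℕ → ℕ → ℕ) → (ℕ → ℕ → ℕ)
  | 0, z => z
  | m + 1, z => (Aproc N (m + 1))^[y (N - m) (m + 1) - y (N - m - 1) (m + 2)] (applyAs N y m z)

/-- `Del↗(Y)` : delete the last ladder (of an array of size `n`). -/
def delLadder (n : ℕ) (y : ℕ → ℕ → ℕ) : ℕ → ℕ → ℕ := fun i j =>
  if 1 ≤ i ∧ 1 ≤ j ∧ i + j ≤ n then y i j else 0

/-- The combinatorial Fourier transform `T`. -/
def Tmap : ℕ → (ℕ → ℕ → ℕ) → (ℕ → ℕ → ℕ)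
  | 0, y => y
  | 1, y => y
  | n + 2, y =>
      applyAs (n + 2) y (n + 2) (adjChute (Tmap (n + 1) (delLadder (n + 2) y)) (fun _ => 0))

/-- Iterate procedure `B` (with `k = 1`), recording the list of produced integers `q`. -/
def Biter (n : ℕ) (y : ℕ → ℕ → ℕ) : ℕ → ((ℕ → ℕ → ℕ) × List ℕ)
  | 0 => (y, [])
  | m + 1 =>
    let p := Biter n y m
    let b := Bproc n p.1 1
    (b.1, p.2 ++ [b.2])

/-- `Y ∪↗ P` : adjoin `P` as the new bottommost ladder (result of size `N`). -/
def adjLadder (N : ℕ) (z : ℕ → ℕ → ℕ) (p : ℕ → ℕ) : ℕ → ℕ → ℕ := fun i j =>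
  if 1 ≤ i ∧ 1 ≤ j ∧ i + j = N + 1 then p j else z i j

/-- The inverse combinatorial Fourier transform `T'`. -/
def Tinv : ℕ → (ℕ → ℕ → ℕ) → (ℕ → ℕ → ℕ)
  | 0, y => y
  | 1, y => y
  | n + 2, y =>
    let r := Biter (n + 2) y (udim (n + 2) y 1)
    adjLadder (n + 2) (Tinv (n + 1) (delChute r.1)) (fun j => r.2.countP (fun q => decide (j ≤ q)))

/-- The composition `x_{i+j-1} ∘ ⋯ ∘ x_{i+1} ∘ x_i` (`j` maps, starting at vertex `i`). -/
def chainMap (w : ℕ → ℕ) (x : ∀ m : ℕ, (Fin (w m) → ℂ) →ₗ[ℂ] (Fin (w (m + 1)) → ℂ)) (i : ℕ) :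
    ∀ j : ℕ, (Fin (w i) → ℂ) →ₗ[ℂ] (Fin (w (i + j)) → ℂ)
  | 0 => LinearMap.id
  | j + 1 => (x (i + j)).comp (chainMap w x i j)

/-- `u` is a Jordan basis of type `Y` for the representation `x`. -/
def IsJordanBasis (n : ℕ) (w : ℕ → ℕ) (y : ℕ → ℕ → ℕ)
    (x : ∀ m : ℕ, (Fin (w m) → ℂ) →ₗ[ℂ] (Fin (w (m + 1)) → ℂ))
    (u : ∀ m : ℕ, ℕ → ℕ → (Fin (w m) → ℂ)) : Prop :=
  (∀ i, 1 ≤ i → i ≤ n →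
    (LinearIndependent ℂ
      (fun p : {p : ℕ × ℕ // 1 ≤ p.1 ∧ p.1 ≤ n - i + 1 ∧ 1 ≤ p.2 ∧ p.2 ≤ y i p.1} =>
        u i p.1.1 p.1.2) ∧
    Submodule.span ℂ
      (Set.range (fun p : {p : ℕ × ℕ // 1 ≤ p.1 ∧ p.1 ≤ n - i + 1 ∧ 1 ≤ p.2 ∧ p.2 ≤ y i p.1} =>
        u i p.1.1 p.1.2)) = ⊤)) ∧
  (∀ i j k, 1 ≤ i → i + 1 ≤ n → 1 ≤ j → j ≤ n - i + 1 → 1 ≤ k → k ≤ y i j →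
    x i (u i j k) = if 2 ≤ j then u (i + 1) (j - 1) k else 0)

/-- `V` is a kernel flag of type `Y` (with the convention `V i 0 = ⊥`). -/
def IsKerFlag (n : ℕ) (w : ℕ → ℕ) (y : ℕ → ℕ → ℕ)
    (V : ∀ i : ℕ, ℕ → Submodule ℂ (Fin (w i) → ℂ)) : Prop :=
  ∀ i, 1 ≤ i → i ≤ n →
    V i 0 = ⊥ ∧
    (∀ j, j ≤ n - i → V i j ≤ V i (j + 1)) ∧
    V i (n - i + 1) = ⊤ ∧
    (∀ j, 1 ≤ j → j ≤ n - i + 1 → Module.finrank ℂ (V i j) = ∑ h ∈ Finset.Icc 1 j, y i h)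

/-- The representation `x` preserves the kernel flag `V`. -/
def PreservesFlag (n : ℕ) (w : ℕ → ℕ)
    (x : ∀ m : ℕ, (Fin (w m) → ℂ) →ₗ[ℂ] (Fin (w (m + 1)) → ℂ))
    (V : ∀ i : ℕ, ℕ → Submodule ℂ (Fin (w i) → ℂ)) : Prop :=
  ∀ i, 1 ≤ i → i + 1 ≤ n → ∀ j, 1 ≤ j → j ≤ n - i + 1 → ∀ v ∈ V i j,
    (j = 1 → x i v = 0) ∧ (2 ≤ j → x i v ∈ V (i + 1) (j - 1))

/-- The flag of kernels `V i j = ker (x_{i+j-1} ∘ ⋯ ∘ x_i)`. -/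
def kerFlag (w : ℕ → ℕ) (x : ∀ m : ℕ, (Fin (w m) → ℂ) →ₗ[ℂ] (Fin (w (m + 1)) → ℂ)) :
    ∀ i : ℕ, ℕ → Submodule ℂ (Fin (w i) → ℂ) := fun i j => LinearMap.ker (chainMap w x i j)

/-- The Lie-algebra stabilizer of the flag `V` inside `𝔤(w) = ∏ End(ℂ^{w_i})`. -/
def stabFlagSub (n : ℕ) (w : ℕ → ℕ) (V : ∀ i : ℕ, ℕ → Submodule ℂ (Fin (w i) → ℂ)) :
    Submodule ℂ (∀ i : Fin n, (Fin (w (i.val + 1)) → ℂ) →ₗ[ℂ] (Fin (w (i.val + 1)) → ℂ)) where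
  carrier := {g | ∀ (i : Fin n) (j : ℕ), 1 ≤ j → j ≤ n - (i.val + 1) + 1 →
    ∀ v ∈ V (i.val + 1) j, g i v ∈ V (i.val + 1) j}
  add_mem' := by
    intro a b ha hb i j h1 h2 v hv
    simpa using (V (i.val + 1) j).add_mem (ha i j h1 h2 v hv) (hb i j h1 h2 v hv)
  zero_mem' := by
    intro i j h1 h2 v hv
    simpa using (V (i.val + 1) j).zero_mem
  smul_mem' := by
    intro c a ha i j h1 h2 v hv
    simpa using (V (i.val + 1) j).smul_mem c (ha i j h1 h2 v hv)

/-- The linear space `E(w)^V` of representations preserving the kernel flag `V`. -/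
def presFlagSub (n : ℕ) (w : ℕ → ℕ) (V : ∀ i : ℕ, ℕ → Submodule ℂ (Fin (w i) → ℂ)) :
    Submodule ℂ (∀ i : Fin (n - 1), (Fin (w (i.val + 1)) → ℂ) →ₗ[ℂ] (Fin (w (i.val + 2)) → ℂ)) where
  carrier := {x | ∀ (i : Fin (n - 1)) (j : ℕ), 1 ≤ j → j ≤ n - (i.val + 1) + 1 →
    ∀ v ∈ V (i.val + 1) j,
      (j = 1 → x i v = 0) ∧ (2 ≤ j → x i v ∈ V (i.val + 2) (j - 1))}
  add_mem' := by
    intro a b ha hb i j h1 h2 v hv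
    obtain ⟨ha1, ha2⟩ := ha i j h1 h2 v hv
    obtain ⟨hb1, hb2⟩ := hb i j h1 h2 v hv
    constructor
    · intro hj
      simp [ha1 hj, hb1 hj]
    · intro hj
      simpa using (V (i.val + 2) (j - 1)).add_mem (ha2 hj) (hb2 hj)
  zero_mem' := by
    intro i j h1 h2 v hv
    constructor
    · intro _; simp
    · intro _
      simpa using (V (i.val + 2) (j - 1)).zero_mem
  smul_mem' := by
    intro c a ha i j h1 h2 v hv
    obtain ⟨ha1, ha2⟩ := ha i j h1 h2 v hv
    constructor
    · intro hj
      simp [ha1 hj]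
    · intro hj
      simpa using (V (i.val + 2) (j - 1)).smul_mem c (ha2 hj)

end


noncomputable section

private lemma ladder_mono (n : ℕ) (y : ℕ → ℕ → ℕ) (hy : IsTri n y)
    (i j : ℕ) (hi : 1 ≤ i) (hij : i + j ≤ n + 1) :
    ∀ m, m < j → y i j ≤ y (i + m) (j - m) := by
  intro m
  induction m with
  | zero => intro _; simp
  | succ m ih =>
    intro hm
    refine (ih (by omega)).trans ?_
    have h2 := hy.2 (i + m + 1) (j - (m + 1)) (by omega) (by omega) (by omega) (by omega)
    have e1 : i + m + 1 - 1 = i + m := by omega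
    have e2 : j - (m + 1) + 1 = j - m := by omega
    rw [e1, e2] at h2
    exact h2

private lemma chainMap_eval (n : ℕ) (w : ℕ → ℕ) (hw0 : ∀ m, m = 0 ∨ n < m → w m = 0)
    (y : ℕ → ℕ → ℕ) (hy : IsTri n y)
    (x : ∀ m : ℕ, (Fin (w m) → ℂ) →ₗ[ℂ] (Fin (w (m + 1)) → ℂ))
    (u : ∀ m : ℕ, ℕ → ℕ → (Fin (w m) → ℂ)) (hu : IsJordanBasis n w y x u)
    (i j k : ℕ) (hi : 1 ≤ i) (hj : 1 ≤ j) (hjn : i + j ≤ n + 1)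
    (hk1 : 1 ≤ k) (hk : k ≤ y i j) :
    ∀ m, chainMap w x i m (u i j k) = if m < j then u (i + m) (j - m) k else 0 := by
  intro m
  induction m with
  | zero => rw [if_pos (show 0 < j by omega)]; rfl
  | succ m ih =>
    have hch : chainMap w x i (m + 1) (u i j k) = x (i + m) (chainMap w x i m (u i j k)) := rfl
    rw [hch, ih]
    by_cases h1 : m + 1 < j
    · rw [if_pos (show m < j by omega), if_pos h1]
      have hmono := ladder_mono n y hy i j hi hjn m (by omega)
      have hx := hu.2 (i + m) (j - m) k (by omega) (by omega) (by omega) (by omega) hk1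
        (le_trans hk hmono)
      rw [hx, if_pos (show 2 ≤ j - m by omega)]
      rfl
    · rw [if_neg h1]
      by_cases h2 : m < j
      · rw [if_pos h2]
        have hj1 : j - m = 1 := by omega
        rw [hj1]
        by_cases h3 : i + m + 1 ≤ n
        · have hmono := ladder_mono n y hy i j hi hjn m h2
          rw [hj1] at hmono
          have hx := hu.2 (i + m) 1 k (by omega) h3 le_rfl (by omega) hk1 (le_trans hk hmono)
          rw [hx, if_neg (by omega)]
        · funext a
          have ha := a.2
          have hz : w (i + m + 1) = 0 := hw0 _ (Or.inr (by omega))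
          exact absurd ha (by omega)
      · rw [if_neg h2]
        simp

private lemma heq_zero_iff (w : ℕ → ℕ) {a b : ℕ} (h : a = b)
    (A : Fin (w a) → ℂ) (B : Fin (w b) → ℂ) (hAB : HEq A B) : A = 0 ↔ B = 0 := by
  subst h
  rw [eq_of_heq hAB]

private lemma chainMap_shift (w : ℕ → ℕ)
    (x : ∀ m : ℕ, (Fin (w m) → ℂ) →ₗ[ℂ] (Fin (w (m + 1)) → ℂ)) (i : ℕ) (v : Fin (w i) → ℂ) :
    ∀ m, (chainMap w x i (m + 1) v = 0 ↔ chainMap w x (i + 1) m (x i v) = 0) := by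
  have key : ∀ m, HEq (chainMap w x i (m + 1) v) (chainMap w x (i + 1) m (x i v)) := by
    intro m
    induction m with
    | zero => exact HEq.rfl
    | succ m ih =>
      have hcongr : ∀ {a b : ℕ} (h : a = b) (A : Fin (w a) → ℂ) (B : Fin (w b) → ℂ),
          HEq A B → HEq (x a A) (x b B) := by
        intro a b h A B hAB
        subst h
        rw [eq_of_heq hAB]
      show HEq (x (i + (m + 1)) (chainMap w x i (m + 1) v))
        (x ((i + 1) + m) (chainMap w x (i + 1) m (x i v)))
      exact hcongr (by omega) _ _ ih
  intro m
  exact heq_zero_iff w (by omega) _ _ (key m)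

private lemma finrank_ker_chainMap (n : ℕ) (w : ℕ → ℕ) (hw0 : ∀ m, m = 0 ∨ n < m → w m = 0)
    (y : ℕ → ℕ → ℕ) (hy : IsTri n y) (hyd : ∀ i, 1 ≤ i → i ≤ n → udim n y i = w i)
    (x : ∀ m : ℕ, (Fin (w m) → ℂ) →ₗ[ℂ] (Fin (w (m + 1)) → ℂ))
    (u : ∀ m : ℕ, ℕ → ℕ → (Fin (w m) → ℂ)) (hu : IsJordanBasis n w y x u)
    (i j : ℕ) (hi : 1 ≤ i) (hin : i ≤ n) (hjn : i + j ≤ n + 1) :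
    Module.finrank ℂ (LinearMap.ker (chainMap w x i j)) = ∑ h ∈ Finset.Icc 1 j, y i h := by
  classical
  set S : Finset ((_ : ℕ) × ℕ) :=
    (Finset.Icc (j + 1) (n - i + 1)).sigma (fun h => Finset.Icc 1 (y i h)) with hS
  set g : ↥S → (Fin (w (i + j)) → ℂ) := fun p => u (i + j) (p.1.1 - j) p.1.2 with hg
  have hmem : ∀ p : ↥S, j + 1 ≤ p.1.1 ∧ p.1.1 ≤ n - i + 1 ∧ 1 ≤ p.1.2 ∧ p.1.2 ≤ y i p.1.1 := by
    intro p
    have hp : ↑p ∈ (Finset.Icc (j + 1) (n - i + 1)).sigma (fun h => Finset.Icc 1 (y i h)) := p.2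
    rw [Finset.mem_sigma, Finset.mem_Icc, Finset.mem_Icc] at hp
    exact ⟨hp.1.1, hp.1.2, hp.2.1, hp.2.2⟩
  have hrange : LinearMap.range (chainMap w x i j) = Submodule.span ℂ (Set.range g) := by
    rw [LinearMap.range_eq_map, ← (hu.1 i hi hin).2, Submodule.map_span]
    have hsub1 : (chainMap w x i j) ''
        (Set.range (fun p : {p : ℕ × ℕ // 1 ≤ p.1 ∧ p.1 ≤ n - i + 1 ∧ 1 ≤ p.2 ∧ p.2 ≤ y i p.1} =>
          u i p.1.1 p.1.2)) ⊆ insert 0 (Set.range g) := by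
      rintro z ⟨_, ⟨p, rfl⟩, rfl⟩
      have he := chainMap_eval n w hw0 y hy x u hu i p.1.1 p.1.2 hi (by exact p.2.1)
        (by have := p.2.2.1; omega) p.2.2.2.1 p.2.2.2.2 j
      by_cases hcase : j < p.1.1
      · rw [if_pos hcase] at he
        right
        refine ⟨⟨⟨p.1.1, p.1.2⟩, ?_⟩, he.symm⟩
        show (⟨p.1.1, p.1.2⟩ : (_ : ℕ) × ℕ) ∈
          (Finset.Icc (j + 1) (n - i + 1)).sigma (fun h => Finset.Icc 1 (y i h))
        rw [Finset.mem_sigma, Finset.mem_Icc, Finset.mem_Icc]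
        exact ⟨⟨show j + 1 ≤ p.1.1 by omega, p.2.2.1⟩, p.2.2.2.1, p.2.2.2.2⟩
      · rw [if_neg hcase] at he
        left
        exact he
    have hsub2 : Set.range g ⊆ (chainMap w x i j) ''
        (Set.range (fun p : {p : ℕ × ℕ // 1 ≤ p.1 ∧ p.1 ≤ n - i + 1 ∧ 1 ≤ p.2 ∧ p.2 ≤ y i p.1} =>
          u i p.1.1 p.1.2)) := by
      rintro z ⟨q, rfl⟩
      obtain ⟨hq1, hq2, hq3, hq4⟩ := hmem q
      refine ⟨u i q.1.1 q.1.2, ⟨⟨⟨q.1.1, q.1.2⟩, by omega, hq2, hq3, hq4⟩, rfl⟩, ?_⟩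
      have he := chainMap_eval n w hw0 y hy x u hu i q.1.1 q.1.2 hi (by omega)
        (by omega) hq3 hq4 j
      rw [if_pos (by omega)] at he
      exact he
    refine le_antisymm ?_ (Submodule.span_mono hsub2)
    calc Submodule.span ℂ ((chainMap w x i j) '' _)
        ≤ Submodule.span ℂ (insert 0 (Set.range g)) := Submodule.span_mono hsub1
      _ = Submodule.span ℂ (Set.range g) := Submodule.span_insert_zero
  have hli : LinearIndependent ℂ g := by
    by_cases hij : i + j ≤ n
    · have h1 := (hu.1 (i + j) (by omega) hij).1
      have hφ : ∀ q : ↥S, 1 ≤ q.1.1 - j ∧ q.1.1 - j ≤ n - (i + j) + 1 ∧ 1 ≤ q.1.2 ∧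
          q.1.2 ≤ y (i + j) (q.1.1 - j) := by
        intro q
        obtain ⟨hq1, hq2, hq3, hq4⟩ := hmem q
        refine ⟨by omega, by omega, hq3, le_trans hq4 ?_⟩
        exact ladder_mono n y hy i q.1.1 hi (by omega) j (by omega)
      have := h1.comp
        (fun q : ↥S => (⟨(q.1.1 - j, q.1.2), hφ q⟩ :
          {p : ℕ × ℕ // 1 ≤ p.1 ∧ p.1 ≤ n - (i + j) + 1 ∧ 1 ≤ p.2 ∧ p.2 ≤ y (i + j) p.1}))
        (by
          intro a b hab
          obtain ⟨ha1, -, -, -⟩ := hmem a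
          obtain ⟨hb1, -, -, -⟩ := hmem b
          rw [Subtype.mk.injEq, Prod.mk.injEq] at hab
          have h11 : a.1.1 = b.1.1 := by omega
          have h12 : a.1.2 = b.1.2 := hab.2
          rcases a with ⟨⟨a1, a2⟩, ha⟩
          rcases b with ⟨⟨b1, b2⟩, hb⟩
          simp only at h11 h12
          subst h11; subst h12; rfl)
      exact this
    · have hSempty : S = ∅ := by
        rw [hS]
        apply Finset.eq_empty_iff_forall_notMem.mpr
        intro p hp
        rw [Finset.mem_sigma, Finset.mem_Icc] at hp
        omega
      haveI : IsEmpty ↥S := Finset.isEmpty_coe_sort.mpr hSempty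
      exact linearIndependent_empty_type
  have hrk := LinearMap.finrank_range_add_finrank_ker (chainMap w x i j)
  rw [hrange, finrank_span_eq_card hli, Fintype.card_coe, Module.finrank_fin_fun] at hrk
  have hwi : w i = ∑ h ∈ Finset.Icc 1 (n - i + 1), y i h := (hyd i hi hin).symm
  have hScard : S.card = ∑ h ∈ Finset.Icc (j + 1) (n - i + 1), y i h := by
    rw [hS, Finset.card_sigma]
    simp [Nat.card_Icc]
  have hsplit : ∑ h ∈ Finset.Icc 1 j, y i h + ∑ h ∈ Finset.Icc (j + 1) (n - i + 1), y i h
      = ∑ h ∈ Finset.Icc 1 (n - i + 1), y i h := by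
    rw [show Finset.Icc 1 j = Finset.Ioc 0 j from Finset.Icc_add_one_left_eq_Ioc 0 j,
      show Finset.Icc (j + 1) (n - i + 1) = Finset.Ioc j (n - i + 1) from Finset.Icc_add_one_left_eq_Ioc j _,
      show Finset.Icc 1 (n - i + 1) = Finset.Ioc 0 (n - i + 1) from Finset.Icc_add_one_left_eq_Ioc 0 _]
    exact Finset.sum_Ioc_consecutive _ (by omega) (by omega)
  omega

end

/-- If `x ∈ O_Y`, there is a unique kernel flag of type `Y` preserved by
`x`, namely `V i j = ker (x_{i+j-1} ∘ ⋯ ∘ x_i)`; moreover the induced maps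
`V_{ij}/V_{i,j-1} → V_{i+1,j-1}/V_{i+1,j-2}` are injective for `j > 1`. -/
theorem kernel_flag_unique_and_injective (n : ℕ) (hn : 1 ≤ n) (w : ℕ → ℕ)
    (hw0 : ∀ m, m = 0 ∨ n < m → w m = 0)
    (y : ℕ → ℕ → ℕ) (hy : InP n w y)
    (x : ∀ m : ℕ, (Fin (w m) → ℂ) →ₗ[ℂ] (Fin (w (m + 1)) → ℂ))
    (u : ∀ m : ℕ, ℕ → ℕ → (Fin (w m) → ℂ)) (hu : IsJordanBasis n w y x u) :
    IsKerFlag n w y (kerFlag w x) ∧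
    PreservesFlag n w x (kerFlag w x) ∧
    (∀ V : ∀ i : ℕ, ℕ → Submodule ℂ (Fin (w i) → ℂ),
      IsKerFlag n w y V → PreservesFlag n w x V →
      ∀ i j, 1 ≤ i → i ≤ n → 1 ≤ j → j ≤ n - i + 1 → V i j = kerFlag w x i j) ∧
    (∀ i j, 1 ≤ i → i + 1 ≤ n → 2 ≤ j → j ≤ n - i + 1 →
      ∀ v ∈ kerFlag w x i j, x i v ∈ kerFlag w x (i + 1) (j - 2) → v ∈ kerFlag w x i (j - 1)) := by
  obtain ⟨hyt, hyd⟩ := hy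
  have hker_rank : ∀ i j, 1 ≤ i → i ≤ n → i + j ≤ n + 1 →
      Module.finrank ℂ (kerFlag w x i j) = ∑ h ∈ Finset.Icc 1 j, y i h := by
    intro i j hi hin hjn
    exact finrank_ker_chainMap n w hw0 y hyt hyd x u hu i j hi hin hjn
  refine ⟨?_, ?_, ?_, ?_⟩
  · -- IsKerFlag
    intro i hi hin
    refine ⟨LinearMap.ker_id, ?_, ?_, ?_⟩
    · intro j hj v hv
      simp only [kerFlag, LinearMap.mem_ker] at hv ⊢
      show x (i + j) (chainMap w x i j v) = 0
      rw [hv, map_zero]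
    · simp only [kerFlag]
      rw [eq_top_iff]
      intro v _
      rw [LinearMap.mem_ker]
      funext a
      have ha := a.2
      have hz : w (i + (n - i + 1)) = 0 := hw0 _ (Or.inr (by omega))
      exact absurd ha (by omega)
    · intro j hj1 hj2
      exact hker_rank i j hi hin (by omega)
  · -- PreservesFlag
    intro i hi hin1 j hj1 hj2 v hv
    simp only [kerFlag, LinearMap.mem_ker] at hv
    constructor
    · intro hj
      subst hj
      exact hv
    · intro hj
      simp only [kerFlag, LinearMap.mem_ker]
      have h := (chainMap_shift w x i v (j - 1)).mp
      rw [show j - 1 + 1 = j by omega] at h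
      exact h hv
  · -- uniqueness
    intro V hV hP
    have claim : ∀ j i, 1 ≤ i → i ≤ n → i + j ≤ n + 1 → ∀ v ∈ V i j,
        chainMap w x i j v = 0 := by
      intro j
      induction j with
      | zero =>
        intro i hi hin _ v hv
        rw [(hV i hi hin).1, Submodule.mem_bot] at hv
        rw [hv, map_zero]
      | succ j ih =>
        intro i hi hin hjn v hv
        by_cases hj0 : j = 0
        · subst hj0
          show chainMap w x i 1 v = 0
          by_cases h3 : i + 1 ≤ n
          · exact (hP i hi h3 1 le_rfl (by omega) v hv).1 rfl
          · funext a
            have ha := a.2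
            have hz : w (i + 1) = 0 := hw0 _ (Or.inr (by omega))
            exact absurd ha (by omega)
        · have h3 : i + 1 ≤ n := by omega
          have hx := (hP i hi h3 (j + 1) (by omega) (by omega) v hv).2 (by omega)
          have hrec := ih (i + 1) (by omega) h3 (by omega) (x i v) hx
          exact (chainMap_shift w x i v j).mpr hrec
    intro i j hi hin hj1 hj2
    have hle : V i j ≤ kerFlag w x i j := by
      intro v hv
      simp only [kerFlag, LinearMap.mem_ker]
      exact claim j i hi hin (by omega) v hv
    refine Submodule.eq_of_le_of_finrank_eq hle ?_
    rw [(hV i hi hin).2.2.2 j hj1 hj2, hker_rank i j hi hin (by omega)]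
  · -- injectivity
    intro i j hi hin hj2 hjn v hv hxv
    simp only [kerFlag, LinearMap.mem_ker] at hxv ⊢
    have h := (chainMap_shift w x i v (j - 2)).mpr hxv
    rw [show j - 2 + 1 = j - 1 by omega] at h
    exact h
end

section
/- Let ((V_{ij}), x) be such that x preserves the kernel flag (V_{ij}) of type Y, and for every j > 1 the induced map V_{ij}/V_{i,j-1} → V_{i+1,j-1}/V_{i+1,j-2} is injective. Then x admits a Jordan basis of type Y, i.e., x ∈ O_Y. -/
open scoped BigOperators Classical

lemma sum_Icc_one_eq_sum_range {M : Type*} [AddCommMonoid M] (f : ℕ → M) (d : ℕ) :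
    ∑ k ∈ Finset.Icc 1 d, f k = ∑ k ∈ Finset.range d, f (k + 1) := by
  induction d with
  | zero => simp
  | succ d ih =>
      rw [Finset.sum_Icc_succ_top (by omega), ih, Finset.sum_range_succ]

/-- Key: the sup of `W'` with the span of an indep-mod-`W'` family has the expected finrank. -/
lemma finrank_sup_span_indep {M : Type*} [AddCommGroup M] [Module ℂ M] [FiniteDimensional ℂ M]
    (W' : Submodule ℂ M) (e : ℕ) (s : ℕ → M)
    (hind : ∀ c : ℕ → ℂ, (∑ k ∈ Finset.range e, c k • s k) ∈ W' → ∀ k < e, c k = 0) :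
    Module.finrank ℂ ↥(W' ⊔ Submodule.span ℂ (Set.range (fun k : Fin e => s k.1)))
      = Module.finrank ℂ W' + e := by
  have hconv : ∀ g : Fin e → ℂ, (∑ i : Fin e, g i • s i.1) =
      ∑ k ∈ Finset.range e, (fun k => if h : k < e then g ⟨k, h⟩ else 0) k • s k := by
    intro g
    rw [← Fin.sum_univ_eq_sum_range (fun k => (if h : k < e then g ⟨k, h⟩ else 0) • s k) e]
    apply Finset.sum_congr rfl
    intro i _
    simp [i.isLt]
  have li : LinearIndependent ℂ (fun k : Fin e => s k.1) := by
    rw [Fintype.linearIndependent_iff]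
    intro g hg
    intro i
    have h0 : (∑ k ∈ Finset.range e, (fun k => if h : k < e then g ⟨k, h⟩ else 0) k • s k) ∈ W' := by
      rw [← hconv, hg]; exact W'.zero_mem
    have := hind _ h0 i.1 i.isLt
    simpa [i.isLt] using this
  have hdisj : W' ⊓ Submodule.span ℂ (Set.range (fun k : Fin e => s k.1)) = ⊥ := by
    rw [Submodule.eq_bot_iff]
    intro z hz
    obtain ⟨hz1, hz2⟩ := Submodule.mem_inf.mp hz
    rw [Submodule.mem_span_range_iff_exists_fun] at hz2
    obtain ⟨g, hg⟩ := hz2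
    have h0 : (∑ k ∈ Finset.range e, (fun k => if h : k < e then g ⟨k, h⟩ else 0) k • s k) ∈ W' := by
      rw [← hconv, hg]; exact hz1
    have hz : ∀ i : Fin e, g i = 0 := by
      intro i
      have := hind _ h0 i.1 i.isLt
      simpa [i.isLt] using this
    rw [← hg]
    simp [hz]
  have hspanrank : Module.finrank ℂ
      ↥(Submodule.span ℂ (Set.range (fun k : Fin e => s k.1))) = e := by
    rw [finrank_span_eq_card li]; simp
  have := Submodule.finrank_sup_add_finrank_inf_eq W'
    (Submodule.span ℂ (Set.range (fun k : Fin e => s k.1)))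
  rw [hdisj, hspanrank] at this
  simpa using this

lemma extend_mod {M : Type*} [AddCommGroup M] [Module ℂ M] [FiniteDimensional ℂ M]
    (W' W : Submodule ℂ M) (hle : W' ≤ W) (e d : ℕ)
    (hd : Module.finrank ℂ W = Module.finrank ℂ W' + d)
    (s : ℕ → M) (hs : ∀ k < e, s k ∈ W)
    (hind : ∀ c : ℕ → ℂ, (∑ k ∈ Finset.range e, c k • s k) ∈ W' → ∀ k < e, c k = 0) :
    ∃ t : ℕ → M, (∀ k < e, t k = s k) ∧ (∀ k < d, t k ∈ W) ∧
      (∀ c : ℕ → ℂ, (∑ k ∈ Finset.range d, c k • t k) ∈ W' → ∀ k < d, c k = 0) ∧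
      W ≤ W' ⊔ Submodule.span ℂ {v | ∃ k < d, v = t k} := by
  -- sup of W' and span of any partial family is ≤ W
  have hsuple : ∀ (e' : ℕ) (s' : ℕ → M), (∀ k < e', s' k ∈ W) →
      W' ⊔ Submodule.span ℂ (Set.range (fun k : Fin e' => s' k.1)) ≤ W := by
    intro e' s' hs'
    apply sup_le hle
    rw [Submodule.span_le]
    rintro v ⟨k, rfl⟩
    exact hs' k.1 k.isLt
  -- one-step extension
  have ext1 : ∀ (e' : ℕ) (s' : ℕ → M), (∀ k < e', s' k ∈ W) →
      (∀ c : ℕ → ℂ, (∑ k ∈ Finset.range e', c k • s' k) ∈ W' → ∀ k < e', c k = 0) →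
      e' < d → ∃ v ∈ W,
        (∀ c : ℕ → ℂ, (∑ k ∈ Finset.range (e'+1),
          c k • (fun k => if k = e' then v else s' k) k) ∈ W' →
          ∀ k < e' + 1, c k = 0) := by
    intro e' s' hs' hind' hlt
    set P := W' ⊔ Submodule.span ℂ (Set.range (fun k : Fin e' => s' k.1)) with hP
    have hPrank := finrank_sup_span_indep W' e' s' hind'
    have hPle : P ≤ W := hsuple e' s' hs'
    have hPlt : P < W := by
      rcases lt_or_eq_of_le hPle with h | h
      · exact h
      · exfalso; rw [← hP, h, hd] at hPrank; omega
    obtain ⟨v, hvW, hvP⟩ := SetLike.exists_of_lt hPlt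
    refine ⟨v, hvW, ?_⟩
    intro c hc
    have hs'mem : ∀ k < e', s' k ∈ P := by
      intro k hk
      exact le_sup_right (α := Submodule ℂ M) (Submodule.subset_span ⟨⟨k, hk⟩, rfl⟩)
    have hsplit : (∑ k ∈ Finset.range (e'+1),
        c k • (fun k => if k = e' then v else s' k) k)
        = (∑ k ∈ Finset.range e', c k • s' k) + c e' • v := by
      rw [Finset.sum_range_succ]
      congr 1
      · apply Finset.sum_congr rfl
        intro k hk
        rw [Finset.mem_range] at hk
        simp [Nat.ne_of_lt hk]
      · simp
    rw [hsplit] at hc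
    have hce : c e' = 0 := by
      by_contra hne
      have hsumP : (∑ k ∈ Finset.range e', c k • s' k) ∈ P :=
        Submodule.sum_mem _ (fun k hk => Submodule.smul_mem _ _
          (hs'mem k (Finset.mem_range.mp hk)))
      have htotP : (∑ k ∈ Finset.range e', c k • s' k) + c e' • v ∈ P :=
        le_sup_left (α := Submodule ℂ M) hc
      have : c e' • v ∈ P := by
        have := P.sub_mem htotP hsumP
        simpa using this
      have : v ∈ P := by
        have h2 := P.smul_mem (c e')⁻¹ this
        rwa [smul_smul, inv_mul_cancel₀ hne, one_smul] at h2
      exact hvP this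
    rw [hce, zero_smul, add_zero] at hc
    intro k hk
    rcases Nat.lt_or_ge k e' with h | h
    · exact hind' c hc k h
    · have : k = e' := by omega
      rw [this]; exact hce
  -- iterate
  have extMany : ∀ (r e' : ℕ) (s' : ℕ → M), (∀ k < e', s' k ∈ W) →
      (∀ c : ℕ → ℂ, (∑ k ∈ Finset.range e', c k • s' k) ∈ W' → ∀ k < e', c k = 0) →
      e' + r ≤ d → ∃ t : ℕ → M, (∀ k < e', t k = s' k) ∧ (∀ k < e' + r, t k ∈ W) ∧
        (∀ c : ℕ → ℂ, (∑ k ∈ Finset.range (e'+r), c k • t k) ∈ W' → ∀ k < e' + r, c k = 0) := by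
    intro r
    induction r with
    | zero =>
        intro e' s' hs' hind' _
        exact ⟨s', fun k _ => rfl, by simpa using hs', by simpa using hind'⟩
    | succ r ih =>
        intro e' s' hs' hind' hle'
        obtain ⟨v, hvW, hind2⟩ := ext1 e' s' hs' hind' (by omega)
        set s'' : ℕ → M := fun k => if k = e' then v else s' k with hs''def
        have hs2 : ∀ k < e' + 1, s'' k ∈ W := by
          intro k hk
          rcases Nat.lt_or_ge k e' with h | h
          · simp only [hs''def, if_neg (Nat.ne_of_lt h)]; exact hs' k h
          · have : k = e' := by omega
            simp [hs''def, this, hvW]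
        obtain ⟨t, ht1, ht2, ht3⟩ := ih (e' + 1) s'' hs2 hind2 (by omega)
        have harith : e' + 1 + r = e' + (r + 1) := by omega
        rw [harith] at ht2 ht3
        refine ⟨t, ?_, ht2, ht3⟩
        intro k hk
        rw [ht1 k (by omega), hs''def]
        simp [Nat.ne_of_lt hk]
  -- e ≤ d
  have hed : e ≤ d := by
    have h1 := finrank_sup_span_indep W' e s hind
    have h2 := Submodule.finrank_mono (hsuple e s hs)
    rw [h1, hd] at h2
    omega
  obtain ⟨t, ht1, ht2, ht3⟩ := extMany (d - e) e s hs hind (by omega)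
  have hde : e + (d - e) = d := by omega
  rw [hde] at ht2 ht3
  refine ⟨t, ht1, ht2, ht3, ?_⟩
  have hseteq : {v : M | ∃ k < d, v = t k} = Set.range (fun k : Fin d => t k.1) := by
    ext v
    constructor
    · rintro ⟨k, hk, rfl⟩; exact ⟨⟨k, hk⟩, rfl⟩
    · rintro ⟨k, rfl⟩; exact ⟨k.1, k.isLt, rfl⟩
  rw [hseteq]
  have heq : W' ⊔ Submodule.span ℂ (Set.range (fun k : Fin d => t k.1)) = W := by
    apply Submodule.eq_of_le_of_finrank_le (hsuple d t ht2)
    rw [finrank_sup_span_indep W' d t ht3, hd]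
  rw [heq]


lemma buildFamily {T : ℕ → Type*} (n : ℕ) (G : ∀ i, T i → Prop) (R : ∀ i, T i → T (i+1) → Prop)
    (u1 : T 0) (h1 : 0 + 1 ≤ n → G 0 u1)
    (step : ∀ i, i + 2 ≤ n → ∀ u : T i, G i u → ∃ v, G (i+1) v ∧ R i u v)
    (default : ∀ i, T i) :
    ∃ f : ∀ i, T i, f 0 = u1 ∧ (∀ i, i + 1 ≤ n → G i (f i)) ∧
      (∀ i, i + 2 ≤ n → R i (f i) (f (i+1))) := by
  classical
  let stepF : ∀ i, T i → T (i+1) := fun i prev =>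
    if h : i + 2 ≤ n ∧ G i prev then (step i h.1 prev h.2).choose else default (i+1)
  let f : ∀ i, T i := fun i => Nat.rec u1 stepF i
  have hG : ∀ i, i + 1 ≤ n → G i (f i) := by
    intro i
    induction i with
    | zero => exact h1
    | succ i ih =>
        intro h
        have hg := ih (by omega)
        have hcond : i + 2 ≤ n ∧ G i (f i) := ⟨h, hg⟩
        have he : f (i+1) = (step i hcond.1 (f i) hcond.2).choose := dif_pos hcond
        rw [he]
        exact (step i hcond.1 (f i) hcond.2).choose_spec.1
  refine ⟨f, rfl, hG, ?_⟩
  intro i h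
  have hcond : i + 2 ≤ n ∧ G i (f i) := ⟨h, hG i (by omega)⟩
  have he : f (i+1) = (step i hcond.1 (f i) hcond.2).choose := dif_pos hcond
  rw [he]
  exact (step i hcond.1 (f i) hcond.2).choose_spec.2

/-- Invariant for one level of the Jordan basis construction. -/
def GoodLv (n : ℕ) (w : ℕ → ℕ) (y : ℕ → ℕ → ℕ)
    (V : ∀ i : ℕ, ℕ → Submodule ℂ (Fin (w i) → ℂ)) (i : ℕ)
    (u : ℕ → ℕ → (Fin (w i) → ℂ)) : Prop :=
  (∀ j k, 1 ≤ j → j ≤ n - i + 1 → 1 ≤ k → k ≤ y i j → u j k ∈ V i j) ∧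
  (∀ j, 1 ≤ j → j ≤ n - i + 1 → ∀ c : ℕ → ℂ,
    (∑ k ∈ Finset.Icc 1 (y i j), c k • u j k) ∈ V i (j - 1) →
    ∀ k, 1 ≤ k → k ≤ y i j → c k = 0) ∧
  (∀ j, 1 ≤ j → j ≤ n - i + 1 →
    V i j ≤ V i (j - 1) ⊔ Submodule.span ℂ {v | ∃ k, 1 ≤ k ∧ k ≤ y i j ∧ v = u j k})

lemma Vmono' (n : ℕ) (w : ℕ → ℕ) (y : ℕ → ℕ → ℕ)
    (V : ∀ i : ℕ, ℕ → Submodule ℂ (Fin (w i) → ℂ)) (hV : IsKerFlag n w y V) :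
    ∀ i, 1 ≤ i → i ≤ n → ∀ b a, a ≤ b → b ≤ n - i + 1 → V i a ≤ V i b := by
  intro i hi1 hi2 b
  induction b with
  | zero =>
      intro a h1 _
      have ha : a = 0 := by omega
      subst ha
      exact le_rfl
  | succ b ih =>
      intro a hab hb
      rcases Nat.lt_or_ge a (b+1) with h | h
      · exact le_trans (ih a (by omega) (by omega)) ((hV i hi1 hi2).2.1 b (by omega))
      · have : a = b + 1 := by omega
        rw [this]

lemma dimStep' (n : ℕ) (w : ℕ → ℕ) (y : ℕ → ℕ → ℕ)
    (V : ∀ i : ℕ, ℕ → Submodule ℂ (Fin (w i) → ℂ)) (hV : IsKerFlag n w y V) :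
    ∀ i j, 1 ≤ i → i ≤ n → 1 ≤ j → j ≤ n - i + 1 →
      Module.finrank ℂ (V i j) = Module.finrank ℂ (V i (j - 1)) + y i j := by
  intro i j hi1 hi2 hj1 hj2
  have hfr := (hV i hi1 hi2).2.2.2
  rcases Nat.lt_or_ge j 2 with h | h
  · have hj : j = 1 := by omega
    subst hj
    rw [hfr 1 le_rfl hj2]
    have hbot : V i 0 = ⊥ := (hV i hi1 hi2).1
    simp [hbot]
  · obtain ⟨j', rfl⟩ : ∃ j', j = j' + 2 := ⟨j - 2, by omega⟩
    have e1 : j' + 2 - 1 = j' + 1 := by omega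
    rw [hfr (j'+2) (by omega) hj2, e1, hfr (j'+1) (by omega) (by omega)]
    rw [Finset.sum_Icc_succ_top (by omega : 1 ≤ j' + 2)]

lemma buildLevel (n : ℕ) (w : ℕ → ℕ) (y : ℕ → ℕ → ℕ)
    (V : ∀ i : ℕ, ℕ → Submodule ℂ (Fin (w i) → ℂ)) (hV : IsKerFlag n w y V)
    (l : ℕ) (hl1 : 1 ≤ l) (hl2 : l ≤ n)
    (e : ℕ → ℕ) (s : ℕ → ℕ → (Fin (w l) → ℂ))
    (hs : ∀ j, 1 ≤ j → j ≤ n - l + 1 → ∀ k < e j, s j k ∈ V l j)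
    (hind : ∀ j, 1 ≤ j → j ≤ n - l + 1 → ∀ c : ℕ → ℂ,
      (∑ k ∈ Finset.range (e j), c k • s j k) ∈ V l (j - 1) → ∀ k < e j, c k = 0) :
    ∃ u, GoodLv n w y V l u ∧
      ∀ j, 1 ≤ j → j ≤ n - l + 1 → ∀ k < e j, u j (k + 1) = s j k := by
  classical
  have H : ∀ j, ∃ t : ℕ → (Fin (w l) → ℂ), (1 ≤ j ∧ j ≤ n - l + 1) →
      ((∀ k < e j, t k = s j k) ∧ (∀ k < y l j, t k ∈ V l j) ∧
       (∀ c : ℕ → ℂ, (∑ k ∈ Finset.range (y l j), c k • t k) ∈ V l (j - 1) →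
         ∀ k < y l j, c k = 0) ∧
       V l j ≤ V l (j - 1) ⊔ Submodule.span ℂ {v | ∃ k < y l j, v = t k}) := by
    intro j
    by_cases hj : 1 ≤ j ∧ j ≤ n - l + 1
    · obtain ⟨t, h1, h2, h3, h4⟩ := extend_mod (V l (j-1)) (V l j)
        (Vmono' n w y V hV l hl1 hl2 j (j-1) (by omega) hj.2) (e j) (y l j)
        (dimStep' n w y V hV l j hl1 hl2 hj.1 hj.2) (s j) (hs j hj.1 hj.2) (hind j hj.1 hj.2)
      exact ⟨t, fun _ => ⟨h1, h2, h3, h4⟩⟩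
    · exact ⟨fun _ => 0, fun h => absurd h hj⟩
  choose t ht using H
  refine ⟨fun j k => t j (k - 1), ⟨?_, ?_, ?_⟩, ?_⟩
  · intro j k hj1 hj2 hk1 hk2
    exact (ht j ⟨hj1, hj2⟩).2.1 (k - 1) (by omega)
  · intro j hj1 hj2 c hc k hk1 hk2
    have h3 := (ht j ⟨hj1, hj2⟩).2.2.1
    have hrw : (∑ k ∈ Finset.Icc 1 (y l j), c k • t j (k - 1))
        = ∑ k' ∈ Finset.range (y l j), c (k' + 1) • t j k' := by
      rw [sum_Icc_one_eq_sum_range (fun k => c k • t j (k - 1)) (y l j)]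
      apply Finset.sum_congr rfl
      intro k' _
      simp
    rw [hrw] at hc
    have h5 := h3 (fun k' => c (k' + 1)) hc (k - 1) (by omega)
    have hk' : k - 1 + 1 = k := by omega
    simpa only [hk'] using h5
  · intro j hj1 hj2
    have h4 := (ht j ⟨hj1, hj2⟩).2.2.2
    have hset : {v : Fin (w l) → ℂ | ∃ k < y l j, v = t j k}
        = {v | ∃ k, 1 ≤ k ∧ k ≤ y l j ∧ v = t j (k - 1)} := by
      ext v
      constructor
      · rintro ⟨k, hk, rfl⟩
        exact ⟨k + 1, by omega, by omega, by simp⟩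
      · rintro ⟨k, h1, h2, rfl⟩
        exact ⟨k - 1, by omega, rfl⟩
    rw [hset] at h4
    exact h4
  · intro j hj1 hj2 k hk
    have := (ht j ⟨hj1, hj2⟩).1 k hk
    simpa using this

lemma spanCum (n : ℕ) (w : ℕ → ℕ) (y : ℕ → ℕ → ℕ)
    (V : ∀ i : ℕ, ℕ → Submodule ℂ (Fin (w i) → ℂ)) (hV : IsKerFlag n w y V)
    (i : ℕ) (hi1 : 1 ≤ i) (hi2 : i ≤ n) (u : ℕ → ℕ → (Fin (w i) → ℂ))
    (hg : GoodLv n w y V i u) :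
    ∀ j, j ≤ n - i + 1 → V i j ≤ Submodule.span ℂ
      {v | ∃ j' k, 1 ≤ j' ∧ j' ≤ j ∧ 1 ≤ k ∧ k ≤ y i j' ∧ v = u j' k} := by
  intro j
  induction j with
  | zero => intro _; rw [(hV i hi1 hi2).1]; exact bot_le
  | succ j ih =>
      intro hj
      have h1 := hg.2.2 (j+1) (by omega) hj
      have e1 : j + 1 - 1 = j := by omega
      rw [e1] at h1
      refine le_trans h1 (sup_le ?_ ?_)
      · refine le_trans (ih (by omega)) (Submodule.span_mono ?_)
        rintro v ⟨j', k, h1', h2', h3', h4', rfl⟩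
        exact ⟨j', k, h1', by omega, h3', h4', rfl⟩
      · refine Submodule.span_mono ?_
        rintro v ⟨k, h1', h2', rfl⟩
        exact ⟨j + 1, k, by omega, le_rfl, h1', h2', rfl⟩

lemma gIndep (n : ℕ) (w : ℕ → ℕ) (y : ℕ → ℕ → ℕ)
    (V : ∀ i : ℕ, ℕ → Submodule ℂ (Fin (w i) → ℂ)) (hV : IsKerFlag n w y V)
    (i : ℕ) (hi1 : 1 ≤ i) (hi2 : i ≤ n) (u : ℕ → ℕ → (Fin (w i) → ℂ))
    (hg : GoodLv n w y V i u) :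
    ∀ j1, j1 ≤ n - i + 1 → ∀ (j0 : ℕ) (s : Finset (ℕ × ℕ)) (g : ℕ × ℕ → ℂ),
      (∀ p ∈ s, 1 ≤ p.1 ∧ p.1 ≤ j1 ∧ 1 ≤ p.2 ∧ p.2 ≤ y i p.1) →
      (∑ p ∈ s, g p • u p.1 p.2) ∈ V i j0 → ∀ p ∈ s, j0 < p.1 → g p = 0 := by
  classical
  intro j1
  induction j1 with
  | zero =>
      intro _ j0 s g hmem _ p hp _
      have := hmem p hp
      omega
  | succ j1 ih =>
      intro hj1 j0 s g hmem hsum p hp hj0p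
      by_cases hcase : j1 + 1 ≤ j0
      · have := hmem p hp
        omega
      have hj0 : j0 ≤ j1 := by omega
      set sT := s.filter (fun q => q.1 = j1 + 1) with hsT
      set sR := s.filter (fun q => ¬ q.1 = j1 + 1) with hsR
      have hsplit : (∑ p ∈ s, g p • u p.1 p.2)
          = (∑ p ∈ sT, g p • u p.1 p.2) + (∑ p ∈ sR, g p • u p.1 p.2) :=
        (Finset.sum_filter_add_sum_filter_not s _ _).symm
      have hRmem : (∑ p ∈ sR, g p • u p.1 p.2) ∈ V i j1 := by
        apply Submodule.sum_mem
        intro q hq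
        obtain ⟨hq1, hq2⟩ := Finset.mem_filter.mp hq
        have h1 := hmem q hq1
        exact Submodule.smul_mem _ _
          (Vmono' n w y V hV i hi1 hi2 j1 q.1 (by omega) (by omega)
            (hg.1 q.1 q.2 h1.1 (by omega) h1.2.2.1 h1.2.2.2))
      have hTmem : (∑ p ∈ sT, g p • u p.1 p.2) ∈ V i j1 := by
        have htot : (∑ p ∈ s, g p • u p.1 p.2) ∈ V i j1 :=
          Vmono' n w y V hV i hi1 hi2 j1 j0 hj0 (by omega) hsum
        rw [hsplit] at htot
        have := (V i j1).sub_mem htot hRmem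
        simpa using this
      have hfib : (∑ p ∈ sT, g p • u p.1 p.2)
          = ∑ k ∈ Finset.Icc 1 (y i (j1+1)),
              (∑ p ∈ sT.filter (fun q => q.2 = k), g p) • u (j1+1) k := by
        rw [← Finset.sum_fiberwise_of_maps_to (g := fun q : ℕ × ℕ => q.2)
          (t := Finset.Icc 1 (y i (j1+1)))
          (fun q hq => by
            obtain ⟨hq1, hq2⟩ := Finset.mem_filter.mp hq
            have h1 := hmem q hq1
            rw [Finset.mem_Icc]
            constructor
            · exact h1.2.2.1
            · rw [← hq2]; exact h1.2.2.2)
          (fun p => g p • u p.1 p.2)]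
        apply Finset.sum_congr rfl
        intro k _
        rw [Finset.sum_smul]
        apply Finset.sum_congr rfl
        intro q hq
        obtain ⟨hq1, hq2⟩ := Finset.mem_filter.mp hq
        obtain ⟨hq3, hq4⟩ := Finset.mem_filter.mp hq1
        rw [hq4, hq2]
      have hcoef : ∀ k, 1 ≤ k → k ≤ y i (j1+1) →
          (∑ p ∈ sT.filter (fun q => q.2 = k), g p) = 0 := by
        have e1 : j1 + 1 - 1 = j1 := by omega
        apply hg.2.1 (j1+1) (by omega) hj1
        rw [e1, ← hfib]
        exact hTmem
      by_cases hptop : p.1 = j1 + 1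
      · have hpT : p ∈ sT := Finset.mem_filter.mpr ⟨hp, hptop⟩
        have hfil : sT.filter (fun q => q.2 = p.2) = {p} := by
          apply Finset.eq_singleton_iff_unique_mem.mpr
          refine ⟨Finset.mem_filter.mpr ⟨hpT, rfl⟩, ?_⟩
          intro q hq
          obtain ⟨hq1, hq2⟩ := Finset.mem_filter.mp hq
          obtain ⟨_, hq3⟩ := Finset.mem_filter.mp hq1
          exact Prod.ext (by rw [hq3, hptop]) hq2
        have h1 := hmem p hp
        have := hcoef p.2 h1.2.2.1 (by rw [← hptop]; exact h1.2.2.2)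
        rwa [hfil, Finset.sum_singleton] at this
      · have hpR : p ∈ sR := Finset.mem_filter.mpr ⟨hp, hptop⟩
        have hTzero : (∑ p ∈ sT, g p • u p.1 p.2) = 0 := by
          rw [hfib]
          apply Finset.sum_eq_zero
          intro k hk
          obtain ⟨hk1, hk2⟩ := Finset.mem_Icc.mp hk
          rw [hcoef k hk1 hk2, zero_smul]
        have hRsum : (∑ q ∈ sR, g q • u q.1 q.2) ∈ V i j0 := by
          rw [hsplit, hTzero, zero_add] at hsum
          exact hsum
        refine ih (by omega) j0 sR g ?_ hRsum p hpR hj0p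
        intro q hq
        obtain ⟨hq1, hq2⟩ := Finset.mem_filter.mp hq
        have h1 := hmem q hq1
        exact ⟨h1.1, by omega, h1.2.2⟩

/-- If `x` preserves a kernel flag `V` of type `Y` and all the induced
maps `V_{ij}/V_{i,j-1} → V_{i+1,j-1}/V_{i+1,j-2}` (for `j > 1`) are injective, then `x`
admits a Jordan basis of type `Y`, i.e. `x ∈ O_Y`. -/
theorem mem_orbit_of_kernel_flag (n : ℕ) (hn : 1 ≤ n) (w : ℕ → ℕ)
    (hw0 : ∀ m, m = 0 ∨ n < m → w m = 0)
    (y : ℕ → ℕ → ℕ) (hy : InP n w y)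
    (x : ∀ m : ℕ, (Fin (w m) → ℂ) →ₗ[ℂ] (Fin (w (m + 1)) → ℂ))
    (V : ∀ i : ℕ, ℕ → Submodule ℂ (Fin (w i) → ℂ))
    (hV : IsKerFlag n w y V) (hpres : PreservesFlag n w x V)
    (hinj : ∀ i j, 1 ≤ i → i + 1 ≤ n → 2 ≤ j → j ≤ n - i + 1 →
      ∀ v ∈ V i j, x i v ∈ V (i + 1) (j - 2) → v ∈ V i (j - 1)) :
    ∃ u : ∀ m : ℕ, ℕ → ℕ → (Fin (w m) → ℂ), IsJordanBasis n w y x u := by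
  classical
  have base : ∃ u1, GoodLv n w y V 1 u1 := by
    obtain ⟨u1, hgu, -⟩ := buildLevel n w y V hV 1 le_rfl hn (fun _ => 0) (fun _ _ => 0)
      (by intro j _ _ k hk; simp at hk) (by intro j _ _ c _ k hk; simp at hk)
    exact ⟨u1, hgu⟩
  have stepEx : ∀ i, 1 ≤ i → i + 1 ≤ n → ∀ up, GoodLv n w y V i up →
      ∃ un, GoodLv n w y V (i+1) un ∧
        ∀ j k, 1 ≤ j → j ≤ n - (i+1) + 1 → 1 ≤ k → k ≤ y i (j+1) →
          un j k = x i (up (j+1) k) := by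
    intro i hi1 hi2 up hg
    have hsprf : ∀ j, 1 ≤ j → j ≤ n - (i+1) + 1 → ∀ k < y i (j+1),
        x i (up (j+1) (k+1)) ∈ V (i+1) j := by
      intro j hj1 hj2 k hk
      have hj2' : j + 1 ≤ n - i + 1 := by omega
      have hv : up (j+1) (k+1) ∈ V i (j+1) :=
        hg.1 (j+1) (k+1) (by omega) hj2' (by omega) (by omega)
      have h2 := (hpres i hi1 hi2 (j+1) (by omega) hj2' _ hv).2 (by omega)
      simpa using h2
    have hindprf : ∀ j, 1 ≤ j → j ≤ n - (i+1) + 1 → ∀ c : ℕ → ℂ,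
        (∑ k ∈ Finset.range (y i (j+1)), c k • x i (up (j+1) (k+1))) ∈ V (i+1) (j-1) →
        ∀ k < y i (j+1), c k = 0 := by
      intro j hj1 hj2 c hc k hk
      have hj2' : j + 1 ≤ n - i + 1 := by omega
      have hvmem : (∑ k ∈ Finset.range (y i (j+1)), c k • up (j+1) (k+1)) ∈ V i (j+1) := by
        apply Submodule.sum_mem
        intro k' hk'
        rw [Finset.mem_range] at hk'
        exact Submodule.smul_mem _ _ (hg.1 (j+1) (k'+1) (by omega) hj2' (by omega) (by omega))
      have hxv : x i (∑ k ∈ Finset.range (y i (j+1)), c k • up (j+1) (k+1))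
          = ∑ k ∈ Finset.range (y i (j+1)), c k • x i (up (j+1) (k+1)) := by
        rw [map_sum]
        apply Finset.sum_congr rfl
        intro k' _
        rw [map_smul]
      have hxmem : x i (∑ k ∈ Finset.range (y i (j+1)), c k • up (j+1) (k+1))
          ∈ V (i+1) (j+1-2) := by
        have e2 : j + 1 - 2 = j - 1 := by omega
        rw [hxv, e2]
        exact hc
      have hvj : (∑ k ∈ Finset.range (y i (j+1)), c k • up (j+1) (k+1)) ∈ V i j := by
        have h5 := hinj i (j+1) hi1 hi2 (by omega) hj2' _ hvmem hxmem
        simpa using h5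
      have hmem2 : (∑ k ∈ Finset.Icc 1 (y i (j+1)), (fun k => c (k-1)) k • up (j+1) k)
          ∈ V i (j+1-1) := by
        have e3 : j + 1 - 1 = j := by omega
        rw [e3, sum_Icc_one_eq_sum_range]
        simpa only [Nat.add_sub_cancel] using hvj
      have h6 := hg.2.1 (j+1) (by omega) hj2' (fun k => c (k-1)) hmem2 (k+1) (by omega) (by omega)
      simpa only [Nat.add_sub_cancel] using h6
    obtain ⟨un, hgu, hcomp⟩ := buildLevel n w y V hV (i+1) (by omega) hi2
      (fun j => y i (j+1)) (fun j k => x i (up (j+1) (k+1))) hsprf hindprf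
    refine ⟨un, hgu, ?_⟩
    intro j k hj1 hj2 hk1 hk2
    have h8 := hcomp j hj1 hj2 (k-1) (by omega)
    have hk' : k - 1 + 1 = k := by omega
    rw [hk'] at h8
    exact h8
  obtain ⟨u1, hu1⟩ := base
  obtain ⟨f, hf0, hfG, hfR⟩ := buildFamily (T := fun i => ℕ → ℕ → (Fin (w (i+1)) → ℂ)) n
    (fun i u => GoodLv n w y V (i+1) u)
    (fun i up un => ∀ j k, 1 ≤ j → j ≤ n - (i+2) + 1 → 1 ≤ k → k ≤ y (i+1) (j+1) →
      un j k = x (i+1) (up (j+1) k))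
    u1 (fun _ => hu1)
    (fun i h2 uu hg => stepEx (i+1) (by omega) h2 uu hg)
    (fun _ => fun _ _ => 0)
  refine ⟨fun m => Nat.casesOn (motive := fun m => ℕ → ℕ → (Fin (w m) → ℂ)) m
    (fun _ _ => 0) f, ?_, ?_⟩
  · intro i hi1 hi2
    obtain ⟨i', rfl⟩ : ∃ i', i = i' + 1 := ⟨i - 1, by omega⟩
    have hg := hfG i' hi2
    constructor
    · show LinearIndependent ℂ
        (fun p : {p : ℕ × ℕ // 1 ≤ p.1 ∧ p.1 ≤ n - (i'+1) + 1 ∧ 1 ≤ p.2 ∧ p.2 ≤ y (i'+1) p.1} =>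
          f i' p.1.1 p.1.2)
      rw [linearIndependent_iff']
      intro s' g hsum p hp
      set F : ℕ × ℕ → ℂ := fun q =>
        if h : 1 ≤ q.1 ∧ q.1 ≤ n - (i'+1) + 1 ∧ 1 ≤ q.2 ∧ q.2 ≤ y (i'+1) q.1 then g ⟨q, h⟩ else 0
        with hF
      have hFp : ∀ p' : {p : ℕ × ℕ // 1 ≤ p.1 ∧ p.1 ≤ n - (i'+1) + 1 ∧ 1 ≤ p.2 ∧
          p.2 ≤ y (i'+1) p.1}, F p'.1 = g p' := fun p' => dif_pos p'.2
      have hmemprop : ∀ q ∈ s'.image Subtype.val,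
          1 ≤ q.1 ∧ q.1 ≤ n - (i'+1) + 1 ∧ 1 ≤ q.2 ∧ q.2 ≤ y (i'+1) q.1 := by
        intro q hq
        obtain ⟨p', _, rfl⟩ := Finset.mem_image.mp hq
        exact p'.2
      have hsum2 : (∑ q ∈ s'.image Subtype.val, F q • f i' q.1 q.2) ∈ V (i'+1) 0 := by
        rw [(hV (i'+1) hi1 hi2).1, Submodule.mem_bot]
        rw [Finset.sum_image (fun a _ b _ h => Subtype.ext h)]
        rw [← hsum]
        apply Finset.sum_congr rfl
        intro p' _
        rw [hFp p']
      have hzero := gIndep n w y V hV (i'+1) hi1 hi2 (f i') hg (n - (i'+1) + 1) le_rfl 0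
        (s'.image Subtype.val) F hmemprop hsum2 p.1 (Finset.mem_image_of_mem _ hp) p.2.1
      rw [← hFp p]
      exact hzero
    · show Submodule.span ℂ (Set.range
        (fun p : {p : ℕ × ℕ // 1 ≤ p.1 ∧ p.1 ≤ n - (i'+1) + 1 ∧ 1 ≤ p.2 ∧ p.2 ≤ y (i'+1) p.1} =>
          f i' p.1.1 p.1.2)) = ⊤
      rw [eq_top_iff]
      intro v _
      have hvmem : v ∈ V (i'+1) (n - (i'+1) + 1) := by
        rw [(hV (i'+1) hi1 hi2).2.2.1]
        trivial
      have h1 := spanCum n w y V hV (i'+1) hi1 hi2 (f i') hg (n - (i'+1) + 1) le_rfl hvmem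
      refine Submodule.span_mono ?_ h1
      rintro v' ⟨j', k, h1', h2', h3', h4', rfl⟩
      exact ⟨⟨(j', k), ⟨h1', h2', h3', h4'⟩⟩, rfl⟩
  · intro i j k hi1 hi2 hj1 hj2 hk1 hk2
    obtain ⟨i', rfl⟩ : ∃ i', i = i' + 1 := ⟨i - 1, by omega⟩
    by_cases hj : 2 ≤ j
    · rw [if_pos hj]
      have hR := hfR i' hi2
      have e1 : j - 1 + 1 = j := by omega
      have h9 := hR (j-1) k (by omega) (by omega) hk1 (by rw [e1]; exact hk2)
      rw [e1] at h9
      exact h9.symm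
    · rw [if_neg hj]
      have hj1' : j = 1 := by omega
      subst hj1'
      have hgi := hfG i' (by omega)
      have hv : f i' 1 k ∈ V (i'+1) 1 := hgi.1 1 k le_rfl (by omega) hk1 hk2
      exact (hpres (i'+1) hi1 hi2 1 le_rfl (by omega) _ hv).1 rfl
end
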